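/- Let A(t) = tr((g(t)⁻¹h(t))²) where g' = 2Hh and h' = S + 2H h g⁻¹ h − A·h (pointwise, ignoring Laplacian terms by taking S symmetric given), with H = tr(g⁻¹h). Then A'(t) = 2tr(g⁻¹S g⁻¹ h) − 2A², i.e. the reaction term of |A|² under the flow is −2|A|⁴. -/

import Mathlib

open Matrix

namespace Stmt11Aux

attribute [local instance] Matrix.linftyOpNormedRing Matrix.linftyOpNormedAlgebra

variable {n : ℕ}

/-- Entrywise derivatives give a matrix-valued derivative. -/
lemma hasDerivAt_of_entries {M : ℝ → Matrix (Fin n) (Fin n) ℝ}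
    {M' : Matrix (Fin n) (Fin n) ℝ} {t₀ : ℝ}
    (h : ∀ i j, HasDerivAt (fun t => M t i j) (M' i j) t₀) :
    HasDerivAt M M' t₀ := by
  have key : HasDerivAt (fun t => ∑ i : Fin n, ∑ j : Fin n,
      (M t i j) • (single i j (1:ℝ)))
      (∑ i : Fin n, ∑ j : Fin n, (M' i j) • (single i j (1:ℝ))) t₀ := by
    apply HasDerivAt.fun_sum
    intro i _
    apply HasDerivAt.fun_sum
    intro j _
    exact (h i j).smul_const _
  have e : ∀ X : Matrix (Fin n) (Fin n) ℝ,
      X = ∑ i : Fin n, ∑ j : Fin n, (X i j) • (single i j (1:ℝ)) := by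
    intro X
    conv_lhs => rw [matrix_eq_sum_single X]
    simp [smul_single]
  have hMfun : M = fun t => ∑ i : Fin n, ∑ j : Fin n,
      (M t i j) • (single i j (1:ℝ)) := funext fun t => e (M t)
  rw [hMfun, e M']
  exact key

end Stmt11Aux

namespace Stmt11Aux

attribute [local instance] Matrix.linftyOpNormedRing Matrix.linftyOpNormedAlgebra

variable {n : ℕ}

/-- Derivative of the matrix inverse. -/
lemma hasDerivAt_inv {g : ℝ → Matrix (Fin n) (Fin n) ℝ}
    {g' : Matrix (Fin n) (Fin n) ℝ} {t₀ : ℝ}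
    (hu : IsUnit (g t₀)) (hg : HasDerivAt g g' t₀) :
    HasDerivAt (fun t => (g t)⁻¹) (-((g t₀)⁻¹ * g' * (g t₀)⁻¹)) t₀ := by
  obtain ⟨u, hu⟩ := hu
  have hF : HasFDerivAt Ring.inverse
      (-(ContinuousLinearMap.mulLeftRight ℝ (Matrix (Fin n) (Fin n) ℝ)) ↑u⁻¹ ↑u⁻¹) (g t₀) := by
    rw [← hu]; exact hasFDerivAt_ringInverse (𝕜 := ℝ) u
  have key := hF.comp_hasDerivAt t₀ hg
  have huinv : (↑u⁻¹ : Matrix (Fin n) (Fin n) ℝ) = (g t₀)⁻¹ := by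
    rw [Matrix.coe_units_inv, hu]
  simp only [ContinuousLinearMap.neg_apply, ContinuousLinearMap.mulLeftRight_apply,
    huinv] at key
  have : (fun t => Ring.inverse (g t)) = fun t => (g t)⁻¹ := by
    funext t; rw [Matrix.nonsing_inv_eq_ringInverse]
  rw [← this]
  exact key

/-- Derivative of the trace. -/
lemma hasDerivAt_trace {M : ℝ → Matrix (Fin n) (Fin n) ℝ}
    {M' : Matrix (Fin n) (Fin n) ℝ} {t₀ : ℝ}
    (hM : HasDerivAt M M' t₀) :
    HasDerivAt (fun t => (M t).trace) M'.trace t₀ := by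
  have := ((Matrix.traceLinearMap (Fin n) ℝ ℝ).toContinuousLinearMap.hasFDerivAt
    (x := M t₀)).comp_hasDerivAt t₀ hM
  simp at this
  exact this

end Stmt11Aux

attribute [local instance] Matrix.linftyOpNormedRing Matrix.linftyOpNormedAlgebra

open Stmt11Aux

/-- with `g' = 2Hh` and `h' = S + 2H h g⁻¹ h − |A|² h`, the quantity
`|A|² = tr((g⁻¹h)²)` evolves by `(|A|²)' = 2 tr(g⁻¹ S g⁻¹ h) − 2(|A|²)²`:
the reaction term of `|A|²` under the flow is `−2|A|⁴`. -/
theorem stmt11 {n : ℕ} (g h S : ℝ → Matrix (Fin n) (Fin n) ℝ) (t₀ : ℝ)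
    (hgpd : ∀ t, (g t).PosDef)
    (H A : ℝ → ℝ)
    (hH : ∀ t, H t = ((g t)⁻¹ * h t).trace)
    (hA : ∀ t, A t = (((g t)⁻¹ * h t) * ((g t)⁻¹ * h t)).trace)
    (hgderiv : ∀ i j, HasDerivAt (fun t => g t i j) ((2 * H t₀) * h t₀ i j) t₀)
    (hhderiv : ∀ i j, HasDerivAt (fun t => h t i j)
      ((S t₀ + (2 * H t₀) • (h t₀ * (g t₀)⁻¹ * h t₀) - A t₀ • h t₀) i j) t₀) :
    HasDerivAt A (2 * ((g t₀)⁻¹ * S t₀ * (g t₀)⁻¹ * h t₀).trace - 2 * (A t₀) ^ 2) t₀ := by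
  set G := (g t₀)⁻¹ with hG
  have hu : IsUnit (g t₀) := (Matrix.isUnit_iff_isUnit_det _).mpr
    ((hgpd t₀).det_pos.ne').isUnit
  have hg : HasDerivAt g ((2 * H t₀) • h t₀) t₀ := by
    apply hasDerivAt_of_entries
    intro i j
    simpa [Matrix.smul_apply, smul_eq_mul] using hgderiv i j
  have hh : HasDerivAt h
      (S t₀ + (2 * H t₀) • (h t₀ * G * h t₀) - A t₀ • h t₀) t₀ :=
    hasDerivAt_of_entries hhderiv
  have hinv : HasDerivAt (fun t => (g t)⁻¹) (-(G * ((2 * H t₀) • h t₀) * G)) t₀ :=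
    hasDerivAt_inv hu hg
  have hP : HasDerivAt (fun t => (g t)⁻¹ * h t)
      ((-(G * ((2 * H t₀) • h t₀) * G)) * h t₀
        + G * (S t₀ + (2 * H t₀) • (h t₀ * G * h t₀) - A t₀ • h t₀)) t₀ :=
    hinv.mul hh
  have hQ := hP.mul hP
  have hTr := hasDerivAt_trace hQ
  have hAfun : A = fun t => (((g t)⁻¹ * h t) * ((g t)⁻¹ * h t)).trace := funext hA
  rw [hAfun]
  convert hTr using 1
  · rfl
  have ha : A t₀ = ((G * h t₀) * (G * h t₀)).trace := hA t₀
  rw [ha]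
  simp only [Matrix.smul_mul, Matrix.mul_smul, Matrix.add_mul, Matrix.mul_add,
    Matrix.sub_mul, Matrix.mul_sub, Matrix.neg_mul, Matrix.mul_neg,
    Matrix.trace_add, Matrix.trace_sub, Matrix.trace_neg, Matrix.trace_smul,
    Matrix.mul_assoc, smul_eq_mul]
  rw [show (G * (S t₀ * (G * h t₀))).trace = (G * (h t₀ * (G * S t₀))).trace by
    simp only [← Matrix.mul_assoc]
    rw [Matrix.trace_mul_comm]
    simp only [← Matrix.mul_assoc]
    rw [Matrix.trace_mul_comm]
    simp only [← Matrix.mul_assoc]]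
  ring
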